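/- Subadditivity of the sampling overhead under tensor products: if (c₁, c₂, N₁, N₂) is a feasible quasiprobability recovery for ρ_ABC and (ĉ₁, ĉ₂, N̂₁, N̂₂) one for σ_{A'B'C'}, then setting c̃₁ = c₁ĉ₁ + c₂ĉ₂, c̃₂ = c₁ĉ₂ + c₂ĉ₁ and Ñ₁ = (c₁ĉ₁ N₁⊗N̂₁ + c₂ĉ₂ N₂⊗N̂₂)/c̃₁, Ñ₂ = (c₁ĉ₂ N₁⊗N̂₂ + c₂ĉ₁ N₂⊗N̂₁)/c̃₂ gives a feasible recovery for ρ⊗σ with overhead c̃₁ + c̃₂ = (c₁+c₂)(ĉ₁+ĉ₂); in particular 2^{ν(ρ⊗σ)} ≤ 2^{ν(ρ)}·2^{ν(σ)}. -/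

import Mathlib

open Matrix BigOperators
open scoped ComplexOrder

/-- The block `Q_BC^(ij) = ⟨i|_A ρ_ABC |j⟩_A` of a tripartite operator. -/
noncomputable def QBC {A B C : Type*} [Fintype A] [Fintype B] [Fintype C]
    (ρ : Matrix (A × B × C) (A × B × C) ℂ) (i j : A) : Matrix (B × C) (B × C) ℂ :=
  Matrix.of fun bc bc' => ρ (i, bc.1, bc.2) (j, bc'.1, bc'.2)

/-- The block `Q_B^(ij) = ⟨i|_A (tr_C ρ_ABC) |j⟩_A`. -/
noncomputable def QB {A B C : Type*} [Fintype A] [Fintype B] [Fintype C]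
    (ρ : Matrix (A × B × C) (A × B × C) ℂ) (i j : A) : Matrix B B ℂ :=
  Matrix.of fun b b' => ∑ c : C, ρ (i, b, c) (j, b', c)

/-- Complete positivity via the Choi matrix, together with linearity and trace
preservation: a CPTP map from system `B` to `B ⊗ C`. -/
def IsCPTP {B C : Type*} [Fintype B] [Fintype C] [DecidableEq B]
    (N : Matrix B B ℂ → Matrix (B × C) (B × C) ℂ) : Prop :=
  IsLinearMap ℂ N ∧
  Matrix.PosSemidef (Matrix.of fun p q : B × (B × C) =>
    N (Matrix.single p.1 q.1 1) p.2 q.2) ∧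
  ∀ M, (N M).trace = M.trace

/-- The set of achievable overheads `c₁ + c₂` of quasiprobability decompositions
`(id_A ⊗ (c₁N₁ - c₂N₂))(tr_C ρ_ABC) = ρ_ABC` with `N₁, N₂` CPTP. -/
def overheadSet {A B C : Type*} [Fintype A] [Fintype B] [Fintype C] [DecidableEq B]
    (ρ : Matrix (A × B × C) (A × B × C) ℂ) : Set ℝ :=
  {s | ∃ c₁ c₂ : ℝ, ∃ N₁ N₂ : Matrix B B ℂ → Matrix (B × C) (B × C) ℂ,
      0 ≤ c₁ ∧ 0 ≤ c₂ ∧ IsCPTP N₁ ∧ IsCPTP N₂ ∧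
      (∀ i j, (c₁ : ℂ) • N₁ (QB ρ i j) - (c₂ : ℂ) • N₂ (QB ρ i j) = QBC ρ i j) ∧
      s = c₁ + c₂}

/-- `2^{ν(ρ)}`: the optimal sampling overhead of virtual recovery. -/
noncomputable def overhead {A B C : Type*} [Fintype A] [Fintype B] [Fintype C]
    [DecidableEq B] (ρ : Matrix (A × B × C) (A × B × C) ℂ) : ℝ :=
  sInf (overheadSet ρ)

/-- `ν(ρ) = log₂` of the optimal sampling overhead. -/
noncomputable def nu {A B C : Type*} [Fintype A] [Fintype B] [Fintype C] [DecidableEq B]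
    (ρ : Matrix (A × B × C) (A × B × C) ℂ) : ℝ :=
  Real.logb 2 (overhead ρ)

/-- The tensor product `ρ ⊗ σ` of two tripartite states, viewed as a tripartite state
with parts `A A'`, `B B'`, `C C'`. -/
noncomputable def tensState {A B C A' B' C' : Type*}
    (ρ : Matrix (A × B × C) (A × B × C) ℂ) (σ : Matrix (A' × B' × C') (A' × B' × C') ℂ) :
    Matrix ((A × A') × (B × B') × (C × C')) ((A × A') × (B × B') × (C × C')) ℂ :=
  Matrix.of fun x y =>
    ρ (x.1.1, x.2.1.1, x.2.2.1) (y.1.1, y.2.1.1, y.2.2.1) *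
    σ (x.1.2, x.2.1.2, x.2.2.2) (y.1.2, y.2.1.2, y.2.2.2)

/-- The tensor product `N ⊗ N'` of two maps, as a map from system `B B'` to
`(B B') ⊗ (C C')`. -/
noncomputable def tensMap {B C B' C' : Type*} [Fintype B] [Fintype B'] [DecidableEq B]
    [DecidableEq B']
    (N : Matrix B B ℂ → Matrix (B × C) (B × C) ℂ)
    (N' : Matrix B' B' ℂ → Matrix (B' × C') (B' × C') ℂ)
    (M : Matrix (B × B') (B × B') ℂ) :
    Matrix ((B × B') × (C × C')) ((B × B') × (C × C')) ℂ :=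
  Matrix.of fun x y => ∑ p : (B × B') × (B × B'),
    M p.1 p.2 * N (Matrix.single p.1.1 p.2.1 1) (x.1.1, x.2.1) (y.1.1, y.2.1) *
      N' (Matrix.single p.1.2 p.2.2 1) (x.1.2, x.2.2) (y.1.2, y.2.2)

section Helpers

open scoped Kronecker

theorem kron_psd' {m n : Type*} [Fintype m] [Fintype n] {M : Matrix m m ℂ} {N : Matrix n n ℂ}
    (hM : M.PosSemidef) (hN : N.PosSemidef) : (M ⊗ₖ N).PosSemidef := by
  exact hM.kronecker hN

variable {B C B' C' : Type*} [Fintype B] [Fintype C] [Fintype B'] [Fintype C']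
  [DecidableEq B] [DecidableEq B']

theorem expandN {N : Matrix B B ℂ → Matrix (B × C) (B × C) ℂ}
    (hN : IsLinearMap ℂ N) (X : Matrix B B ℂ) :
    N X = ∑ p : B × B, X p.1 p.2 • N (Matrix.single p.1 p.2 1) := by
  let L := IsLinearMap.mk' N hN
  have hL : ∀ Y, N Y = L Y := fun Y => rfl
  rw [hL]
  conv_lhs => rw [Matrix.matrix_eq_sum_single X]
  rw [map_sum, Fintype.sum_prod_type]
  refine Finset.sum_congr rfl fun a _ => ?_
  rw [map_sum]
  refine Finset.sum_congr rfl fun b _ => ?_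
  rw [show Matrix.single a b (X a b) = X a b • Matrix.single a b 1 by
      rw [Matrix.smul_single, smul_eq_mul, mul_one], _root_.map_smul]
  rfl

theorem tensMap_kron {N : Matrix B B ℂ → Matrix (B × C) (B × C) ℂ}
    {N' : Matrix B' B' ℂ → Matrix (B' × C') (B' × C') ℂ}
    (hN : IsLinearMap ℂ N) (hN' : IsLinearMap ℂ N')
    (X : Matrix B B ℂ) (Y : Matrix B' B' ℂ)
    (x y : (B × B') × (C × C')) :
    tensMap N N' (Matrix.of fun r s => X r.1 s.1 * Y r.2 s.2) x y =
      N X (x.1.1, x.2.1) (y.1.1, y.2.1) * N' Y (x.1.2, x.2.2) (y.1.2, y.2.2) := by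
  have e := Equiv.prodProdProdComm B B B' B'
  calc tensMap N N' (Matrix.of fun r s => X r.1 s.1 * Y r.2 s.2) x y
      = ∑ p : (B × B') × (B × B'),
          X p.1.1 p.2.1 * Y p.1.2 p.2.2 *
            N (Matrix.single p.1.1 p.2.1 1) (x.1.1, x.2.1) (y.1.1, y.2.1) *
            N' (Matrix.single p.1.2 p.2.2 1) (x.1.2, x.2.2) (y.1.2, y.2.2) := by
        simp only [tensMap, Matrix.of_apply]
    _ = ∑ z : (B × B) × (B' × B'),
          (X z.1.1 z.1.2 * N (Matrix.single z.1.1 z.1.2 1) (x.1.1, x.2.1) (y.1.1, y.2.1)) *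
          (Y z.2.1 z.2.2 * N' (Matrix.single z.2.1 z.2.2 1) (x.1.2, x.2.2) (y.1.2, y.2.2)) := by
        rw [← Equiv.sum_comp (Equiv.prodProdProdComm B B B' B')]
        refine Finset.sum_congr rfl fun z _ => ?_
        obtain ⟨⟨a, b⟩, ⟨a', b'⟩⟩ := z
        simp only [Equiv.prodProdProdComm, Equiv.coe_fn_mk]
        ring
    _ = (∑ p : B × B, X p.1 p.2 * N (Matrix.single p.1 p.2 1) (x.1.1, x.2.1) (y.1.1, y.2.1)) *
        (∑ q : B' × B', Y q.1 q.2 * N' (Matrix.single q.1 q.2 1) (x.1.2, x.2.2) (y.1.2, y.2.2)) := by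
        rw [Finset.sum_mul_sum, Fintype.sum_prod_type]
    _ = N X (x.1.1, x.2.1) (y.1.1, y.2.1) * N' Y (x.1.2, x.2.2) (y.1.2, y.2.2) := by
        rw [expandN hN, expandN hN']
        simp [Matrix.sum_apply]

end Helpers

section Helpers2
set_option linter.unusedSectionVars false
open scoped Kronecker

variable {B C B' C' : Type*} [Fintype B] [Fintype C] [Fintype B'] [Fintype C']
  [DecidableEq B] [DecidableEq B']

theorem QB_tens {A A' : Type*} [Fintype A] [Fintype A']
    (ρ : Matrix (A × B × C) (A × B × C) ℂ) (σ : Matrix (A' × B' × C') (A' × B' × C') ℂ)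
    (i j : A × A') :
    QB (tensState ρ σ) i j =
      Matrix.of fun r s => QB ρ i.1 j.1 r.1 s.1 * QB σ i.2 j.2 r.2 s.2 := by
  ext ⟨b, b'⟩ ⟨d, d'⟩
  simp only [QB, tensState, Matrix.of_apply]
  rw [Fintype.sum_prod_type, Finset.sum_mul_sum]

theorem QBC_tens {A A' : Type*} [Fintype A] [Fintype A']
    (ρ : Matrix (A × B × C) (A × B × C) ℂ) (σ : Matrix (A' × B' × C') (A' × B' × C') ℂ)
    (i j : A × A') (x y : (B × B') × (C × C')) :
    QBC (tensState ρ σ) i j x y =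
      QBC ρ i.1 j.1 (x.1.1, x.2.1) (y.1.1, y.2.1) *
        QBC σ i.2 j.2 (x.1.2, x.2.2) (y.1.2, y.2.2) := rfl

theorem choi_tens (N : Matrix B B ℂ → Matrix (B × C) (B × C) ℂ)
    (N' : Matrix B' B' ℂ → Matrix (B' × C') (B' × C') ℂ) :
    (Matrix.of fun p q : (B × B') × ((B × B') × (C × C')) =>
        tensMap N N' (Matrix.single p.1 q.1 1) p.2 q.2) =
      ((Matrix.of fun p q : B × (B × C) => N (Matrix.single p.1 q.1 1) p.2 q.2) ⊗ₖ
        (Matrix.of fun p q : B' × (B' × C') => N' (Matrix.single p.1 q.1 1) p.2 q.2)).submatrix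
        (fun z => ((z.1.1, (z.2.1.1, z.2.2.1)), (z.1.2, (z.2.1.2, z.2.2.2))))
        (fun z => ((z.1.1, (z.2.1.1, z.2.2.1)), (z.1.2, (z.2.1.2, z.2.2.2)))) := by
  ext ⟨⟨p, p'⟩, ⟨⟨b, b'⟩, ⟨c, c'⟩⟩⟩ ⟨⟨q, q'⟩, ⟨⟨d, d'⟩, ⟨e, e'⟩⟩⟩
  simp only [Matrix.of_apply, Matrix.submatrix_apply, Matrix.kroneckerMap_apply, tensMap]
  rw [Fintype.sum_prod_type]
  simp [Matrix.single, Matrix.of_apply, ite_and, ite_mul, zero_mul, one_mul,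
    Finset.sum_ite_eq]

theorem trace_std (i j : B) : (Matrix.single i j (1 : ℂ)).trace =
    if i = j then 1 else 0 := by
  by_cases h : i = j
  · subst h
    simp [Matrix.trace, Matrix.diag, Matrix.single, Finset.sum_ite_eq]
  · rw [if_neg h]
    refine Finset.sum_eq_zero fun x _ => ?_
    simp only [Matrix.diag_apply, Matrix.single, Matrix.of_apply]
    rw [if_neg]
    rintro ⟨h1, h2⟩
    exact h (h1.trans h2.symm)

theorem tensMap_trace {N : Matrix B B ℂ → Matrix (B × C) (B × C) ℂ}
    {N' : Matrix B' B' ℂ → Matrix (B' × C') (B' × C') ℂ}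
    (hN : ∀ M, (N M).trace = M.trace) (hN' : ∀ M, (N' M).trace = M.trace)
    (M : Matrix (B × B') (B × B') ℂ) :
    (tensMap N N' M).trace = M.trace := by
  simp only [Matrix.trace, Matrix.diag, tensMap, Matrix.of_apply]
  rw [Finset.sum_comm]
  have key : ∀ p : (B × B') × (B × B'),
      (∑ x : (B × B') × (C × C'),
        M p.1 p.2 * N (Matrix.single p.1.1 p.2.1 1) (x.1.1, x.2.1) (x.1.1, x.2.1) *
          N' (Matrix.single p.1.2 p.2.2 1) (x.1.2, x.2.2) (x.1.2, x.2.2)) =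
      M p.1 p.2 * (if p.1.1 = p.2.1 then 1 else 0) * (if p.1.2 = p.2.2 then 1 else 0) := by
    intro p
    have h1 := hN (Matrix.single p.1.1 p.2.1 1)
    have h2 := hN' (Matrix.single p.1.2 p.2.2 1)
    rw [trace_std] at h1
    rw [trace_std] at h2
    calc (∑ x : (B × B') × (C × C'),
        M p.1 p.2 * N (Matrix.single p.1.1 p.2.1 1) (x.1.1, x.2.1) (x.1.1, x.2.1) *
          N' (Matrix.single p.1.2 p.2.2 1) (x.1.2, x.2.2) (x.1.2, x.2.2))
        = ∑ z : (B × C) × (B' × C'),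
            M p.1 p.2 * N (Matrix.single p.1.1 p.2.1 1) z.1 z.1 *
              N' (Matrix.single p.1.2 p.2.2 1) z.2 z.2 := by
          rw [← Equiv.sum_comp (Equiv.prodProdProdComm B B' C C')]
          refine Finset.sum_congr rfl fun z _ => ?_
          obtain ⟨⟨a, b⟩, ⟨a', b'⟩⟩ := z
          simp [Equiv.prodProdProdComm]
      _ = M p.1 p.2 * ((N (Matrix.single p.1.1 p.2.1 1)).trace *
            (N' (Matrix.single p.1.2 p.2.2 1)).trace) := by
          simp only [Matrix.trace, Matrix.diag]
          rw [Finset.sum_mul_sum, Fintype.sum_prod_type]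
          simp only [Finset.mul_sum]
          refine Finset.sum_congr rfl fun a _ => Finset.sum_congr rfl fun b _ => by ring
      _ = M p.1 p.2 * (if p.1.1 = p.2.1 then 1 else 0) * (if p.1.2 = p.2.2 then 1 else 0) := by
          rw [h1, h2]; ring
  rw [Finset.sum_congr rfl fun p _ => key p]
  show _ = ∑ u : B × B', M u u
  rw [Fintype.sum_prod_type]
  refine Finset.sum_congr rfl fun r _ => ?_
  have hterm : ∀ r2 : B × B',
      M r r2 * (if r.1 = r2.1 then (1:ℂ) else 0) * (if r.2 = r2.2 then (1:ℂ) else 0) =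
      if r = r2 then M r r2 else 0 := fun r2 => by
    by_cases h1 : r.1 = r2.1
    · by_cases h2 : r.2 = r2.2
      · rw [if_pos h1, if_pos h2, if_pos (Prod.ext h1 h2)]; ring
      · rw [if_pos h1, if_neg h2,
          if_neg (show r ≠ r2 from fun h => h2 (congrArg Prod.snd h))]; ring
    · rw [if_neg h1,
        if_neg (show r ≠ r2 from fun h => h1 (congrArg Prod.fst h))]; ring
  simp only [hterm, Finset.sum_ite_eq, Finset.mem_univ, if_true]

end Helpers2

section Helpers3
set_option linter.unusedSectionVars false
open scoped Kronecker

variable {B C B' C' : Type*} [Fintype B] [Fintype C] [Fintype B'] [Fintype C']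
  [DecidableEq B] [DecidableEq B']

theorem psd_smul' {n : Type*} [Fintype n] {M : Matrix n n ℂ} (hM : M.PosSemidef)
    {a : ℝ} (ha : 0 ≤ a) : (((a : ℝ) : ℂ) • M).PosSemidef := by
  constructor
  · unfold Matrix.IsHermitian
    rw [Matrix.conjTranspose_smul, hM.1.eq]
    congr 1
    simp [Complex.star_def, Complex.conj_ofReal]
  · intro x
    exact (hM.smul (a := ((a : ℝ) : ℂ)) (by rw [Complex.le_def]; simp [ha])).2 x

theorem tensMap_isCPTP {N : Matrix B B ℂ → Matrix (B × C) (B × C) ℂ}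
    {N' : Matrix B' B' ℂ → Matrix (B' × C') (B' × C') ℂ}
    (hN : IsCPTP N) (hN' : IsCPTP N') : IsCPTP (tensMap N N') := by
  refine ⟨⟨?_, ?_⟩, ?_, ?_⟩
  · intro M M'
    ext x y
    simp [tensMap, Matrix.add_apply, add_mul, Finset.sum_add_distrib]
  · intro c M
    ext x y
    simp only [tensMap, Matrix.of_apply, Matrix.smul_apply, smul_eq_mul, Finset.mul_sum]
    exact Finset.sum_congr rfl fun p _ => by ring
  · rw [show (Matrix.of fun p q : (B × B') × ((B × B') × (C × C')) =>
        tensMap N N' (Matrix.single p.1 q.1 1) p.2 q.2) = _ from choi_tens N N']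
    exact (kron_psd' hN.2.1 hN'.2.1).submatrix _
  · exact tensMap_trace hN.2.2 hN'.2.2

theorem cptp_comb {F G : Matrix B B ℂ → Matrix (B × C) (B × C) ℂ}
    (hF : IsCPTP F) (hG : IsCPTP G) {a b : ℝ} (ha : 0 ≤ a) (hb : 0 ≤ b) (hab : a + b = 1) :
    IsCPTP (fun M => ((a : ℝ) : ℂ) • F M + ((b : ℝ) : ℂ) • G M) := by
  have habC : ((a : ℂ) + (b : ℂ)) = 1 := by
    rw [← Complex.ofReal_add, hab, Complex.ofReal_one]
  refine ⟨⟨?_, ?_⟩, ?_, ?_⟩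
  · intro M M'
    rw [hF.1.map_add, hG.1.map_add]
    module
  · intro c M
    rw [hF.1.map_smul, hG.1.map_smul]
    module
  · have : (Matrix.of fun p q : B × (B × C) =>
        (((a : ℝ) : ℂ) • F (Matrix.single p.1 q.1 1) +
          ((b : ℝ) : ℂ) • G (Matrix.single p.1 q.1 1)) p.2 q.2) =
        ((a : ℂ) • (Matrix.of fun p q : B × (B × C) =>
            F (Matrix.single p.1 q.1 1) p.2 q.2) +
          (b : ℂ) • (Matrix.of fun p q : B × (B × C) =>
            G (Matrix.single p.1 q.1 1) p.2 q.2)) := by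
      ext p q
      simp [Matrix.add_apply, Matrix.smul_apply]
    rw [this]
    exact (psd_smul' hF.2.1 ha).add (psd_smul' hG.2.1 hb)
  · intro M
    rw [Matrix.trace_add, Matrix.trace_smul, Matrix.trace_smul, hF.2.2, hG.2.2,
      ← add_smul, habC, one_smul]

theorem smul_collapse {α : Type*} [AddCommGroup α] [Module ℂ α] {r s : ℝ}
    (hr : 0 ≤ r) (hs : 0 ≤ s) (X Y : α) :
    ((r + s : ℝ) : ℂ) • (((r / (r + s) : ℝ) : ℂ) • X + ((s / (r + s) : ℝ) : ℂ) • Y) =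
      ((r : ℝ) : ℂ) • X + ((s : ℝ) : ℂ) • Y := by
  rcases eq_or_lt_of_le (add_nonneg hr hs) with h | h
  · have hr0 : r = 0 := by linarith
    have hs0 : s = 0 := by linarith
    simp [hr0, hs0]
  · have hrs : (r + s : ℝ) ≠ 0 := ne_of_gt h
    rw [smul_add, smul_smul, smul_smul, ← Complex.ofReal_mul, ← Complex.ofReal_mul,
      mul_div_cancel₀ _ hrs, mul_div_cancel₀ _ hrs]

end Helpers3

section Helpers4
set_option linter.unusedSectionVars false

variable {B C B' C' : Type*} [Fintype B] [Fintype C] [Fintype B'] [Fintype C']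
  [DecidableEq B] [DecidableEq B']

theorem core_recovery {A A' : Type*} [Fintype A] [Fintype A']
    (ρ : Matrix (A × B × C) (A × B × C) ℂ) (σ : Matrix (A' × B' × C') (A' × B' × C') ℂ)
    (c₁ c₂ ch₁ ch₂ : ℝ)
    (N₁ N₂ : Matrix B B ℂ → Matrix (B × C) (B × C) ℂ)
    (Nh₁ Nh₂ : Matrix B' B' ℂ → Matrix (B' × C') (B' × C') ℂ)
    (hN₁ : IsLinearMap ℂ N₁) (hN₂ : IsLinearMap ℂ N₂)
    (hNh₁ : IsLinearMap ℂ Nh₁) (hNh₂ : IsLinearMap ℂ Nh₂)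
    (hrecρ : ∀ i j, (c₁ : ℂ) • N₁ (QB ρ i j) - (c₂ : ℂ) • N₂ (QB ρ i j) = QBC ρ i j)
    (hrecσ : ∀ i j, (ch₁ : ℂ) • Nh₁ (QB σ i j) - (ch₂ : ℂ) • Nh₂ (QB σ i j) = QBC σ i j)
    (i j : A × A') :
    ((c₁ * ch₁ : ℝ) : ℂ) • tensMap N₁ Nh₁ (QB (tensState ρ σ) i j) +
      ((c₂ * ch₂ : ℝ) : ℂ) • tensMap N₂ Nh₂ (QB (tensState ρ σ) i j) -
      (((c₁ * ch₂ : ℝ) : ℂ) • tensMap N₁ Nh₂ (QB (tensState ρ σ) i j) +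
       ((c₂ * ch₁ : ℝ) : ℂ) • tensMap N₂ Nh₁ (QB (tensState ρ σ) i j)) =
      QBC (tensState ρ σ) i j := by
  ext x y
  rw [QB_tens]
  simp only [Matrix.sub_apply, Matrix.add_apply, Matrix.smul_apply, smul_eq_mul]
  rw [tensMap_kron hN₁ hNh₁, tensMap_kron hN₂ hNh₂, tensMap_kron hN₁ hNh₂,
    tensMap_kron hN₂ hNh₁, QBC_tens]
  have h1 := congrArg (fun M : Matrix (B × C) (B × C) ℂ =>
    M (x.1.1, x.2.1) (y.1.1, y.2.1)) (hrecρ i.1 j.1)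
  have h2 := congrArg (fun M : Matrix (B' × C') (B' × C') ℂ =>
    M (x.1.2, x.2.2) (y.1.2, y.2.2)) (hrecσ i.2 j.2)
  simp only [Matrix.sub_apply, Matrix.smul_apply, smul_eq_mul] at h1 h2
  push_cast
  linear_combination
    ((ch₁ : ℂ) * Nh₁ (QB σ i.2 j.2) (x.1.2, x.2.2) (y.1.2, y.2.2) -
      (ch₂ : ℂ) * Nh₂ (QB σ i.2 j.2) (x.1.2, x.2.2) (y.1.2, y.2.2)) * h1 +
    QBC ρ i.1 j.1 (x.1.1, x.2.1) (y.1.1, y.2.1) * h2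

theorem overheadSet_nonneg {A : Type*} [Fintype A]
    (ρ : Matrix (A × B × C) (A × B × C) ℂ) : ∀ s ∈ overheadSet ρ, (0 : ℝ) ≤ s := by
  rintro s ⟨c₁, c₂, N₁, N₂, h1, h2, _, _, _, rfl⟩
  linarith

theorem mem_tens {A A' : Type*} [Fintype A] [Fintype A']
    (ρ : Matrix (A × B × C) (A × B × C) ℂ) (σ : Matrix (A' × B' × C') (A' × B' × C') ℂ)
    {s t : ℝ} (hs : s ∈ overheadSet ρ) (ht : t ∈ overheadSet σ) :
    s * t ∈ overheadSet (tensState ρ σ) := by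
  obtain ⟨d₁, d₂, M₁, M₂, hd₁, hd₂, hM₁, hM₂, hrec₁, rfl⟩ := hs
  obtain ⟨e₁, e₂, P₁, P₂, he₁, he₂, hP₁, hP₂, hrec₂, rfl⟩ := ht
  classical
  have h11 : (0 : ℝ) ≤ d₁ * e₁ := mul_nonneg hd₁ he₁
  have h22 : (0 : ℝ) ≤ d₂ * e₂ := mul_nonneg hd₂ he₂
  have h12 : (0 : ℝ) ≤ d₁ * e₂ := mul_nonneg hd₁ he₂
  have h21 : (0 : ℝ) ≤ d₂ * e₁ := mul_nonneg hd₂ he₁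
  refine ⟨d₁ * e₁ + d₂ * e₂, d₁ * e₂ + d₂ * e₁,
    (if h : d₁ * e₁ + d₂ * e₂ = 0 then tensMap M₁ P₁ else fun M =>
      ((d₁ * e₁ / (d₁ * e₁ + d₂ * e₂) : ℝ) : ℂ) • tensMap M₁ P₁ M +
        ((d₂ * e₂ / (d₁ * e₁ + d₂ * e₂) : ℝ) : ℂ) • tensMap M₂ P₂ M),
    (if h : d₁ * e₂ + d₂ * e₁ = 0 then tensMap M₁ P₂ else fun M =>
      ((d₁ * e₂ / (d₁ * e₂ + d₂ * e₁) : ℝ) : ℂ) • tensMap M₁ P₂ M +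
        ((d₂ * e₁ / (d₁ * e₂ + d₂ * e₁) : ℝ) : ℂ) • tensMap M₂ P₁ M),
    add_nonneg h11 h22, add_nonneg h12 h21, ?_, ?_, ?_, by ring⟩
  · split_ifs with h
    · exact tensMap_isCPTP hM₁ hP₁
    · have hpos : 0 < d₁ * e₁ + d₂ * e₂ := lt_of_le_of_ne (add_nonneg h11 h22) (Ne.symm h)
      exact cptp_comb (tensMap_isCPTP hM₁ hP₁) (tensMap_isCPTP hM₂ hP₂)
        (div_nonneg h11 hpos.le) (div_nonneg h22 hpos.le)
        (by rw [← add_div]; exact div_self h)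
  · split_ifs with h
    · exact tensMap_isCPTP hM₁ hP₂
    · have hpos : 0 < d₁ * e₂ + d₂ * e₁ := lt_of_le_of_ne (add_nonneg h12 h21) (Ne.symm h)
      exact cptp_comb (tensMap_isCPTP hM₁ hP₂) (tensMap_isCPTP hM₂ hP₁)
        (div_nonneg h12 hpos.le) (div_nonneg h21 hpos.le)
        (by rw [← add_div]; exact div_self h)
  · intro i j
    have key := core_recovery ρ σ d₁ d₂ e₁ e₂ M₁ M₂ P₁ P₂ hM₁.1 hM₂.1 hP₁.1 hP₂.1
      hrec₁ hrec₂ i j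
    have e₁' : ((d₁ * e₁ + d₂ * e₂ : ℝ) : ℂ) •
        (if h : d₁ * e₁ + d₂ * e₂ = 0 then tensMap M₁ P₁ else fun M =>
          ((d₁ * e₁ / (d₁ * e₁ + d₂ * e₂) : ℝ) : ℂ) • tensMap M₁ P₁ M +
            ((d₂ * e₂ / (d₁ * e₁ + d₂ * e₂) : ℝ) : ℂ) • tensMap M₂ P₂ M)
          (QB (tensState ρ σ) i j) =
        ((d₁ * e₁ : ℝ) : ℂ) • tensMap M₁ P₁ (QB (tensState ρ σ) i j) +
          ((d₂ * e₂ : ℝ) : ℂ) • tensMap M₂ P₂ (QB (tensState ρ σ) i j) := by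
      split_ifs with h
      · obtain ⟨hz1, hz2⟩ := (add_eq_zero_iff_of_nonneg h11 h22).mp h
        simp [h, hz1, hz2]
      · exact smul_collapse h11 h22 _ _
    have e₂' : ((d₁ * e₂ + d₂ * e₁ : ℝ) : ℂ) •
        (if h : d₁ * e₂ + d₂ * e₁ = 0 then tensMap M₁ P₂ else fun M =>
          ((d₁ * e₂ / (d₁ * e₂ + d₂ * e₁) : ℝ) : ℂ) • tensMap M₁ P₂ M +
            ((d₂ * e₁ / (d₁ * e₂ + d₂ * e₁) : ℝ) : ℂ) • tensMap M₂ P₁ M)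
          (QB (tensState ρ σ) i j) =
        ((d₁ * e₂ : ℝ) : ℂ) • tensMap M₁ P₂ (QB (tensState ρ σ) i j) +
          ((d₂ * e₁ : ℝ) : ℂ) • tensMap M₂ P₁ (QB (tensState ρ σ) i j) := by
      split_ifs with h
      · obtain ⟨hz1, hz2⟩ := (add_eq_zero_iff_of_nonneg h12 h21).mp h
        simp [h, hz1, hz2]
      · exact smul_collapse h12 h21 _ _
    rw [e₁', e₂']
    exact key

end Helpers4

/-- from feasible quasiprobability recoveries `(c₁, c₂, N₁, N₂)` for `ρ`
and `(ĉ₁, ĉ₂, N̂₁, N̂₂)` for `σ`, the construction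
`c̃₁ = c₁ĉ₁ + c₂ĉ₂`, `c̃₂ = c₁ĉ₂ + c₂ĉ₁`,
`Ñ₁ = (c₁ĉ₁ N₁⊗N̂₁ + c₂ĉ₂ N₂⊗N̂₂)/c̃₁`, `Ñ₂ = (c₁ĉ₂ N₁⊗N̂₂ + c₂ĉ₁ N₂⊗N̂₁)/c̃₂`
gives a feasible recovery for `ρ ⊗ σ` with overhead `c̃₁ + c̃₂ = (c₁+c₂)(ĉ₁+ĉ₂)`;
in particular the optimal sampling overhead is submultiplicative:
`2^{ν(ρ⊗σ)} ≤ 2^{ν(ρ)} · 2^{ν(σ)}`. -/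
theorem sampling_overhead_subadditive {A B C A' B' C' : Type*}
    [Fintype A] [Fintype B] [Fintype C] [DecidableEq B]
    [Fintype A'] [Fintype B'] [Fintype C'] [DecidableEq B']
    (ρ : Matrix (A × B × C) (A × B × C) ℂ) (σ : Matrix (A' × B' × C') (A' × B' × C') ℂ)
    (c₁ c₂ ch₁ ch₂ : ℝ)
    (N₁ N₂ : Matrix B B ℂ → Matrix (B × C) (B × C) ℂ)
    (Nh₁ Nh₂ : Matrix B' B' ℂ → Matrix (B' × C') (B' × C') ℂ)
    (hc₁ : 0 ≤ c₁) (hc₂ : 0 ≤ c₂) (hch₁ : 0 ≤ ch₁) (hch₂ : 0 ≤ ch₂)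
    (hN₁ : IsCPTP N₁) (hN₂ : IsCPTP N₂) (hNh₁ : IsCPTP Nh₁) (hNh₂ : IsCPTP Nh₂)
    (hrecρ : ∀ i j, (c₁ : ℂ) • N₁ (QB ρ i j) - (c₂ : ℂ) • N₂ (QB ρ i j) = QBC ρ i j)
    (hrecσ : ∀ i j, (ch₁ : ℂ) • Nh₁ (QB σ i j) - (ch₂ : ℂ) • Nh₂ (QB σ i j) = QBC σ i j) :
    (c₁ * ch₁ + c₂ * ch₂) + (c₁ * ch₂ + c₂ * ch₁) = (c₁ + c₂) * (ch₁ + ch₂) ∧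
    (∀ hc : c₁ * ch₁ + c₂ * ch₂ ≠ 0, ∀ hc' : c₁ * ch₂ + c₂ * ch₁ ≠ 0,
      IsCPTP (fun M => ((c₁ * ch₁ / (c₁ * ch₁ + c₂ * ch₂) : ℝ) : ℂ) • tensMap N₁ Nh₁ M +
          ((c₂ * ch₂ / (c₁ * ch₁ + c₂ * ch₂) : ℝ) : ℂ) • tensMap N₂ Nh₂ M) ∧
      IsCPTP (fun M => ((c₁ * ch₂ / (c₁ * ch₂ + c₂ * ch₁) : ℝ) : ℂ) • tensMap N₁ Nh₂ M +
          ((c₂ * ch₁ / (c₁ * ch₂ + c₂ * ch₁) : ℝ) : ℂ) • tensMap N₂ Nh₁ M)) ∧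
    (∀ i j, ((c₁ * ch₁ + c₂ * ch₂ : ℝ) : ℂ) •
        (((c₁ * ch₁ / (c₁ * ch₁ + c₂ * ch₂) : ℝ) : ℂ) • tensMap N₁ Nh₁ (QB (tensState ρ σ) i j) +
          ((c₂ * ch₂ / (c₁ * ch₁ + c₂ * ch₂) : ℝ) : ℂ) • tensMap N₂ Nh₂ (QB (tensState ρ σ) i j)) -
        ((c₁ * ch₂ + c₂ * ch₁ : ℝ) : ℂ) •
        (((c₁ * ch₂ / (c₁ * ch₂ + c₂ * ch₁) : ℝ) : ℂ) • tensMap N₁ Nh₂ (QB (tensState ρ σ) i j) +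
          ((c₂ * ch₁ / (c₁ * ch₂ + c₂ * ch₁) : ℝ) : ℂ) • tensMap N₂ Nh₁ (QB (tensState ρ σ) i j)) =
        QBC (tensState ρ σ) i j) ∧
    overhead (tensState ρ σ) ≤ overhead ρ * overhead σ := by
  constructor
  · ring
  refine ⟨fun hc hc' => ⟨?_, ?_⟩, ?_, ?_⟩
  · have hd : 0 < c₁ * ch₁ + c₂ * ch₂ :=
      lt_of_le_of_ne (add_nonneg (mul_nonneg hc₁ hch₁) (mul_nonneg hc₂ hch₂)) (Ne.symm hc)
    exact cptp_comb (tensMap_isCPTP hN₁ hNh₁) (tensMap_isCPTP hN₂ hNh₂)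
      (div_nonneg (mul_nonneg hc₁ hch₁) hd.le) (div_nonneg (mul_nonneg hc₂ hch₂) hd.le)
      (by rw [← add_div]; exact div_self hc)
  · have hd : 0 < c₁ * ch₂ + c₂ * ch₁ :=
      lt_of_le_of_ne (add_nonneg (mul_nonneg hc₁ hch₂) (mul_nonneg hc₂ hch₁)) (Ne.symm hc')
    exact cptp_comb (tensMap_isCPTP hN₁ hNh₂) (tensMap_isCPTP hN₂ hNh₁)
      (div_nonneg (mul_nonneg hc₁ hch₂) hd.le) (div_nonneg (mul_nonneg hc₂ hch₁) hd.le)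
      (by rw [← add_div]; exact div_self hc')
  · intro i j
    rw [smul_collapse (mul_nonneg hc₁ hch₁) (mul_nonneg hc₂ hch₂),
      smul_collapse (mul_nonneg hc₁ hch₂) (mul_nonneg hc₂ hch₁)]
    exact core_recovery ρ σ c₁ c₂ ch₁ ch₂ N₁ N₂ Nh₁ Nh₂ hN₁.1 hN₂.1 hNh₁.1 hNh₂.1
      hrecρ hrecσ i j
  · have hρne : (overheadSet ρ).Nonempty :=
      ⟨c₁ + c₂, c₁, c₂, N₁, N₂, hc₁, hc₂, hN₁, hN₂, hrecρ, rfl⟩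
    have hσne : (overheadSet σ).Nonempty :=
      ⟨ch₁ + ch₂, ch₁, ch₂, Nh₁, Nh₂, hch₁, hch₂, hNh₁, hNh₂, hrecσ, rfl⟩
    have hTbdd : BddBelow (overheadSet (tensState ρ σ)) :=
      ⟨0, fun u hu => overheadSet_nonneg _ u hu⟩
    have key : ∀ s ∈ overheadSet ρ, ∀ t ∈ overheadSet σ,
        overhead (tensState ρ σ) ≤ s * t :=
      fun s hs t ht => csInf_le hTbdd (mem_tens ρ σ hs ht)
    have hρ0 : 0 ≤ overhead ρ := le_csInf hρne (overheadSet_nonneg ρ)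
    have step1 : ∀ t ∈ overheadSet σ, overhead (tensState ρ σ) ≤ overhead ρ * t := by
      intro t ht
      rcases eq_or_lt_of_le (overheadSet_nonneg σ t ht) with h | h
      · obtain ⟨s₀, hs₀⟩ := hρne
        have h2 := key s₀ hs₀ t ht
        rw [← h] at h2 ⊢
        simpa using h2
      · have hdiv : overhead (tensState ρ σ) / t ≤ overhead ρ :=
          le_csInf hρne fun s hs => (div_le_iff₀ h).mpr (key s hs t ht)
        calc overhead (tensState ρ σ) = overhead (tensState ρ σ) / t * t := by
              field_simp
          _ ≤ overhead ρ * t := mul_le_mul_of_nonneg_right hdiv h.le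
    rcases eq_or_lt_of_le hρ0 with h | h
    · obtain ⟨t₀, ht₀⟩ := hσne
      have h2 := step1 t₀ ht₀
      rw [← h] at h2 ⊢
      simpa using h2
    · have hdiv : overhead (tensState ρ σ) / overhead ρ ≤ overhead σ :=
        le_csInf hσne fun t ht => (div_le_iff₀ h).mpr
          (by rw [mul_comm]; exact step1 t ht)
      calc overhead (tensState ρ σ)
          = overhead (tensState ρ σ) / overhead ρ * overhead ρ := by field_simp
        _ ≤ overhead σ * overhead ρ := mul_le_mul_of_nonneg_right hdiv h.le
        _ = overhead ρ * overhead σ := mul_comm _ _
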